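/- Let π = (v_1,…,v_k) be a lexicographic model over binary variables and suppose π satisfies the non-strict statement α ≥ β where α, β are binary alternatives with α(v) < β(v) for some variable v. Then either v does not appear in π, or some variable v' with α(v') > β(v') precedes the first occurrence of v in π. Consequently, π also satisfies the statement 1⃗_v ≥ 0⃗_v, where 1⃗_v is the alternative assigning 1 to all variables except v (which gets 0) and 0⃗_v assigns 0 to all variables except v (which gets 1). -/

import Mathlib

/-- `π ⊨ α ≥ β` for a lexicographic model `π` (a sequence of variables). -/
def LexGe {V W : Type*} [LinearOrder W] (π : List V) (α β : V → W) : Prop :=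
  (∀ v ∈ π, α v = β v) ∨
  ∃ i : Fin π.length, α (π.get i) > β (π.get i) ∧
    ∀ j : Fin π.length, (j : ℕ) < (i : ℕ) → α (π.get j) = β (π.get j)

/-- `π ⊨ α > β` for a lexicographic model `π`. -/
def LexGt {V W : Type*} [LinearOrder W] (π : List V) (α β : V → W) : Prop :=
  ∃ i : Fin π.length, α (π.get i) > β (π.get i) ∧
    ∀ j : Fin π.length, (j : ℕ) < (i : ℕ) → α (π.get j) = β (π.get j)

/-- If a lexicographic model over binary variables satisfies `α ≥ β` where
`α(v) < β(v)`, then `v` does not appear in `π`, or a variable `v'` with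
`α(v') > β(v')` precedes the first occurrence of `v`; consequently `π` satisfies
`1⃗_v ≥ 0⃗_v`. -/
theorem lexGe_vec_of_lt {V : Type*} [DecidableEq V]
    (π : List V) (hne : π ≠ []) (α β : V → ℕ)
    (hbin : ∀ w : V, α w ≤ 1 ∧ β w ≤ 1)
    (hsat : LexGe π α β) (v : V) (hv : α v < β v) :
    ((v ∉ π) ∨
      ∃ j : Fin π.length, α (π.get j) > β (π.get j) ∧
        ∀ k : Fin π.length, π.get k = v → (j : ℕ) < (k : ℕ)) ∧
    LexGe π (fun w => if w = v then (0 : ℕ) else 1)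
            (fun w => if w = v then (1 : ℕ) else 0) := by
  have hlen : 0 < π.length := List.length_pos_iff.mpr hne
  have h1 : (v ∉ π) ∨
      ∃ j : Fin π.length, α (π.get j) > β (π.get j) ∧
        ∀ k : Fin π.length, π.get k = v → (j : ℕ) < (k : ℕ) := by
    by_cases hvp : v ∈ π
    · right
      rcases hsat with hall | ⟨i, hi, hj⟩
      · exact absurd (hall v hvp) (by omega)
      · refine ⟨i, hi, fun k hk => ?_⟩
        by_contra hlt
        push_neg at hlt
        rcases lt_or_eq_of_le hlt with h | h
        · have := hj k h
          rw [hk] at this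
          omega
        · have : π.get k = π.get i := by
            congr 1; exact Fin.ext h
          rw [hk] at this
          rw [← this] at hi
          omega
    · exact Or.inl hvp
  have h0ne : π.get ⟨0, hlen⟩ ≠ v := by
    rcases h1 with h | ⟨j, _, hk⟩
    · intro he; exact h (he ▸ List.get_mem π ⟨0, hlen⟩)
    · intro he
      have := hk ⟨0, hlen⟩ he
      simp at this
  refine ⟨h1, Or.inr ⟨⟨0, hlen⟩, ?_, ?_⟩⟩
  · simp only [List.get_eq_getElem] at h0ne
    simp [h0ne]
  · intro j hj
    simp at hj
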